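/- Let q be a prime number with q ≥ 2 and l an integer with l ≥ q, and let B = B(q,l). Then every eigenvalue μ of the real matrix B Bᵀ with μ ≠ ql satisfies μ ≤ (√(l−1) + √(q−1))². Consequently B is the biadjacency matrix of a Ramanujan bigraph with degrees (l,q): every singular value of B other than the largest one √(ql) is at most √(l−1) + √(q−1). -/

import Mathlib

open Matrix Polynomial

/-- The `q × q` cyclic-shift permutation matrix over `ℝ`:
`P i j = 1` iff `j ≡ i - 1 (mod q)`. -/
def cyclicShift (q : ℕ) : Matrix (Fin q) (Fin q) ℝ :=
  Matrix.of fun i j => if (j : ZMod q) = (i : ZMod q) - 1 then 1 else 0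

/-- The `q² × lq` array-code matrix `B(q,l)`, with `q` block-rows and `l` block-columns
of `q × q` blocks, whose `(i,j)` block (`0`-indexed) is `P^(i*j)`. -/
def arrayB (q l : ℕ) : Matrix (Fin q × Fin q) (Fin l × Fin q) ℝ :=
  Matrix.of fun r c => (cyclicShift q ^ ((r.1 : ℕ) * (c.1 : ℕ))) r.2 c.2

section AuxRamanujan

variable (q : ℕ) [NeZero q]

def zEquiv : Fin q ≃ ZMod q where
  toFun i := (i : ZMod q)
  invFun z := ⟨z.val, z.val_lt⟩
  left_inv i := by
    ext
    simp [ZMod.val_natCast, Nat.mod_eq_of_lt i.isLt]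
  right_inv z := by
    simp [ZMod.natCast_val, ZMod.cast_id]

lemma zEquiv_apply (i : Fin q) : zEquiv q i = (i : ZMod q) := rfl

lemma cast_inj' {a b : Fin q} (h : (a : ZMod q) = (b : ZMod q)) : a = b :=
  (zEquiv q).injective h

lemma cyclicShift_pow (k : ℕ) : ∀ s c : Fin q,
    (cyclicShift q ^ k) s c = if (c : ZMod q) = (s : ZMod q) - (k : ZMod q) then 1 else 0 := by
  induction k with
  | zero =>
    intro s c
    simp only [pow_zero, Matrix.one_apply, Nat.cast_zero, sub_zero]
    congr 1
    simp only [eq_iff_iff]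
    exact ⟨fun h => by rw [h], fun h => (cast_inj' q h).symm⟩
  | succ k ih =>
    intro s c
    rw [pow_succ, Matrix.mul_apply]
    rw [Finset.sum_eq_single ((zEquiv q).symm ((s : ZMod q) - (k : ZMod q)))]
    · rw [ih]
      have hm : (((zEquiv q).symm ((s : ZMod q) - (k : ZMod q)) : Fin q) : ZMod q)
          = (s : ZMod q) - (k : ZMod q) := (zEquiv q).apply_symm_apply _
      rw [hm]
      simp only [if_pos rfl, one_mul, cyclicShift, Matrix.of_apply, hm]
      congr 1
      push_cast
      ring
    · intro b _ hb
      rw [ih]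
      have : ¬ ((b : ZMod q) = (s : ZMod q) - (k : ZMod q)) := by
        intro h
        apply hb
        apply (zEquiv q).injective
        rw [zEquiv_apply, h]
        exact ((zEquiv q).apply_symm_apply _).symm
      rw [if_neg this, zero_mul]
    · intro h; exact absurd (Finset.mem_univ _) h

lemma arrayB_apply (l : ℕ) (r : Fin q × Fin q) (c : Fin l × Fin q) :
    arrayB q l r c = if (c.2 : ZMod q) = (r.2 : ZMod q) - (r.1 : ZMod q) * (c.1 : ZMod q)
      then 1 else 0 := by
  rw [arrayB, Matrix.of_apply, cyclicShift_pow]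
  push_cast
  rfl

/-- unique-solution sum over `Fin q` -/
lemma sum_ite_fin (x : ZMod q) (g : Fin q → ℝ) :
    ∑ s : Fin q, (if x = (s : ZMod q) then g s else 0) = g ((zEquiv q).symm x) := by
  simp_rw [← zEquiv_apply]
  rw [← Equiv.sum_comp (zEquiv q).symm]
  simp only [Equiv.apply_symm_apply]
  rw [Finset.sum_ite_eq]
  simp

lemma arrayB_colsum (l : ℕ) (c : Fin l × Fin q) :
    ∑ r : Fin q × Fin q, arrayB q l r c = q := by
  rw [Fintype.sum_prod_type]
  have : ∀ i : Fin q, ∑ s : Fin q, arrayB q l (i, s) c = 1 := by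
    intro i
    have : ∀ s : Fin q, arrayB q l (i, s) c
        = if ((c.2 : ZMod q) + (i : ZMod q) * (c.1 : ZMod q)) = (s : ZMod q) then 1 else 0 := by
      intro s
      rw [arrayB_apply]
      congr 1
      simp only [eq_iff_iff]
      constructor <;> intro h <;> [rw [h]; rw [← h]] <;> ring
    simp_rw [this]
    rw [sum_ite_fin q]
  simp_rw [this]
  simp

lemma arrayB_rowsum (l : ℕ) (r : Fin q × Fin q) :
    ∑ c : Fin l × Fin q, arrayB q l r c = l := by
  rw [Fintype.sum_prod_type]
  have : ∀ j : Fin l, ∑ s : Fin q, arrayB q l r (j, s) = 1 := by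
    intro j
    have : ∀ s : Fin q, arrayB q l r (j, s)
        = if ((r.2 : ZMod q) - (r.1 : ZMod q) * (j : ZMod q)) = (s : ZMod q) then 1 else 0 := by
      intro s
      rw [arrayB_apply]
      congr 1
      simp only [eq_iff_iff]
      exact ⟨fun h => h.symm, fun h => h.symm⟩
    simp_rw [this]
    rw [sum_ite_fin q]
  simp_rw [this]
  simp

lemma key_ineq (hq : q.Prime) (w : ZMod q → ZMod q → ℝ)
    (hS : ∑ i : ZMod q, ∑ s : ZMod q, w i s = 0) :
    ∑ t : ZMod q, ∑ c : ZMod q, (∑ i : ZMod q, w i (c + i * t)) ^ 2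
      ≤ q * ∑ i : ZMod q, ∑ s : ZMod q, (w i s) ^ 2 := by
  haveI : Fact q.Prime := ⟨hq⟩
  set R : ZMod q → ℝ := fun i => ∑ s : ZMod q, w i s with hR
  set W : ZMod q → ℝ := fun i => ∑ s : ZMod q, (w i s) ^ 2 with hW
  have expand : ∀ t c : ZMod q, (∑ i : ZMod q, w i (c + i * t)) ^ 2
      = ∑ i : ZMod q, ∑ i' : ZMod q, w i (c + i * t) * w i' (c + i' * t) := by
    intro t c
    rw [sq, Finset.sum_mul_sum]
  have main : ∑ t : ZMod q, ∑ c : ZMod q, (∑ i : ZMod q, w i (c + i * t)) ^ 2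
      = ∑ i : ZMod q, ∑ i' : ZMod q, ∑ t : ZMod q, ∑ c : ZMod q,
          w i (c + i * t) * w i' (c + i' * t) := by
    simp_rw [expand]
    calc (∑ t : ZMod q, ∑ c : ZMod q, ∑ i : ZMod q, ∑ i' : ZMod q,
            w i (c + i * t) * w i' (c + i' * t))
        = ∑ t : ZMod q, ∑ i : ZMod q, ∑ c : ZMod q, ∑ i' : ZMod q,
            w i (c + i * t) * w i' (c + i' * t) :=
          Finset.sum_congr rfl fun t _ => Finset.sum_comm
      _ = ∑ t : ZMod q, ∑ i : ZMod q, ∑ i' : ZMod q, ∑ c : ZMod q,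
            w i (c + i * t) * w i' (c + i' * t) :=
          Finset.sum_congr rfl fun t _ => Finset.sum_congr rfl fun i _ => Finset.sum_comm
      _ = ∑ i : ZMod q, ∑ t : ZMod q, ∑ i' : ZMod q, ∑ c : ZMod q,
            w i (c + i * t) * w i' (c + i' * t) := Finset.sum_comm
      _ = ∑ i : ZMod q, ∑ i' : ZMod q, ∑ t : ZMod q, ∑ c : ZMod q,
            w i (c + i * t) * w i' (c + i' * t) :=
          Finset.sum_congr rfl fun i _ => Finset.sum_comm
  have hdiag : ∀ i : ZMod q, (∑ t : ZMod q, ∑ c : ZMod q,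
      w i (c + i * t) * w i (c + i * t)) = (q : ℝ) * W i := by
    intro i
    have h1 : ∀ t : ZMod q, (∑ c : ZMod q, w i (c + i * t) * w i (c + i * t)) = W i := by
      intro t
      rw [hW]
      simp_rw [sq]
      exact Equiv.sum_comp (Equiv.addRight (i * t)) (fun c => w i c * w i c)
    simp_rw [h1]
    rw [Finset.sum_const, Finset.card_univ, ZMod.card, nsmul_eq_mul]
  have hoff : ∀ i i' : ZMod q, i' ≠ i → (∑ t : ZMod q, ∑ c : ZMod q,
      w i (c + i * t) * w i' (c + i' * t)) = R i * R i' := by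
    intro i i' hne
    have hd : i' - i ≠ 0 := sub_ne_zero_of_ne hne
    have h1 : ∀ t : ZMod q, (∑ c : ZMod q, w i (c + i * t) * w i' (c + i' * t))
        = ∑ s : ZMod q, w i s * w i' (s + (i' - i) * t) := by
      intro t
      rw [← Equiv.sum_comp (Equiv.subRight (i * t))
        (fun c => w i (c + i * t) * w i' (c + i' * t))]
      apply Finset.sum_congr rfl
      intro s _
      simp only [Equiv.subRight_apply]
      congr 1 <;> congr 1 <;> ring
    simp_rw [h1]
    rw [Finset.sum_comm]
    have h2 : ∀ s : ZMod q, (∑ t : ZMod q, w i s * w i' (s + (i' - i) * t))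
        = w i s * R i' := by
      intro s
      rw [← Finset.mul_sum]
      congr 1
      calc (∑ t : ZMod q, w i' (s + (i' - i) * t))
          = ∑ u : ZMod q, w i' (s + u) :=
            Equiv.sum_comp (Equiv.mulLeft₀ (i' - i) hd) (fun u => w i' (s + u))
        _ = R i' := Equiv.sum_comp (Equiv.addLeft s) (w i')
    simp_rw [h2]
    rw [← Finset.sum_mul]
  have split : ∀ i i' : ZMod q, (∑ t : ZMod q, ∑ c : ZMod q,
      w i (c + i * t) * w i' (c + i' * t))
      = R i * R i' + (if i' = i then (q : ℝ) * W i - R i ^ 2 else 0) := by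
    intro i i'
    by_cases h : i' = i
    · subst h
      rw [if_pos rfl, hdiag, sq]
      ring
    · rw [if_neg h, hoff i i' h, add_zero]
  rw [main]
  simp_rw [split]
  rw [Finset.sum_congr rfl (fun i _ => Finset.sum_add_distrib), Finset.sum_add_distrib]
  have hRsum : ∑ i : ZMod q, R i = 0 := hS
  have e1 : ∑ i : ZMod q, ∑ i' : ZMod q, R i * R i' = 0 := by
    simp_rw [← Finset.mul_sum, ← Finset.sum_mul, hRsum, zero_mul]
  have e2 : ∀ i : ZMod q, (∑ i' : ZMod q, if i' = i then (q : ℝ) * W i - R i ^ 2 else 0)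
      = (q : ℝ) * W i - R i ^ 2 := by
    intro i
    rw [Finset.sum_ite_eq']
    simp
  rw [e1, zero_add]
  simp_rw [e2]
  rw [Finset.sum_sub_distrib, ← Finset.mul_sum]
  have : (0:ℝ) ≤ ∑ i : ZMod q, R i ^ 2 := Finset.sum_nonneg fun i _ => sq_nonneg _
  linarith

lemma fiber_card (l : ℕ) (t : ZMod q) :
    (Finset.univ.filter (fun j : Fin l => (j : ZMod q) = t)).card ≤ l / q + 1 := by
  classical
  have := Finset.card_le_card_of_injOn (fun j : Fin l => (j : ℕ) / q)
    (s := Finset.univ.filter (fun j : Fin l => (j : ZMod q) = t))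
    (t := Finset.range (l / q + 1))
    (by
      intro j _
      rw [Finset.mem_coe, Finset.mem_range, Nat.lt_succ_iff]
      exact Nat.div_le_div_right j.isLt.le)
    (by
      intro j₁ h₁ j₂ h₂ hdiv
      rw [Finset.mem_coe, Finset.mem_filter] at h₁ h₂
      have m₁ : (j₁ : ℕ) % q = t.val := by
        rw [← ZMod.val_natCast, h₁.2]
      have m₂ : (j₂ : ℕ) % q = t.val := by
        rw [← ZMod.val_natCast, h₂.2]
      have hdiv' : (j₁ : ℕ) / q = (j₂ : ℕ) / q := by simpa using hdiv
      have : (j₁ : ℕ) = (j₂ : ℕ) := by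
        calc (j₁ : ℕ) = q * ((j₁ : ℕ) / q) + (j₁ : ℕ) % q := (Nat.div_add_mod _ _).symm
          _ = q * ((j₂ : ℕ) / q) + (j₂ : ℕ) % q := by rw [hdiv', m₁, m₂]
          _ = (j₂ : ℕ) := Nat.div_add_mod _ _
      exact Fin.ext this)
  simpa using this

lemma sum_fin_le (l : ℕ) (Q : ZMod q → ℝ) (hQ : ∀ t, 0 ≤ Q t) :
    ∑ j : Fin l, Q (j : ZMod q) ≤ ((l / q + 1 : ℕ) : ℝ) * ∑ t : ZMod q, Q t := by
  classical
  rw [← Finset.sum_fiberwise_of_maps_to' (g := fun j : Fin l => (j : ZMod q))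
      (t := (Finset.univ : Finset (ZMod q))) (fun j _ => Finset.mem_univ _) Q]
  rw [Finset.mul_sum]
  apply Finset.sum_le_sum
  intro t _
  rw [Finset.sum_const, nsmul_eq_mul]
  apply mul_le_mul_of_nonneg_right _ (hQ t)
  exact_mod_cast fiber_card q l t

lemma arrayB_mulVec_ones (l : ℕ) :
    (arrayB q l * (arrayB q l)ᵀ).mulVec (fun _ => (1:ℝ)) = fun _ => (q : ℝ) * l := by
  funext r
  calc ((arrayB q l * (arrayB q l)ᵀ).mulVec (fun _ => (1:ℝ))) r
      = ∑ r' : Fin q × Fin q, (arrayB q l * (arrayB q l)ᵀ) r r' := by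
        simp [Matrix.mulVec, dotProduct]
    _ = ∑ r' : Fin q × Fin q, ∑ c : Fin l × Fin q, arrayB q l r c * arrayB q l r' c := by
        simp [Matrix.mul_apply, Matrix.transpose_apply]
    _ = ∑ c : Fin l × Fin q, ∑ r' : Fin q × Fin q, arrayB q l r c * arrayB q l r' c :=
        Finset.sum_comm
    _ = ∑ c : Fin l × Fin q, arrayB q l r c * ∑ r' : Fin q × Fin q, arrayB q l r' c := by
        simp_rw [Finset.mul_sum]
    _ = ∑ c : Fin l × Fin q, arrayB q l r c * q := by
        simp_rw [arrayB_colsum]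
    _ = (∑ c : Fin l × Fin q, arrayB q l r c) * q := by rw [Finset.sum_mul]
    _ = (q : ℝ) * l := by rw [arrayB_rowsum]; ring


end AuxRamanujan

/-- Every eigenvalue of `BBᵀ` other than `ql` is at most `(√(l-1) + √(q-1))²`;
consequently every singular value of `B` other than `√(ql)` is at most
`√(l-1) + √(q-1)`, i.e. `B` is the biadjacency matrix of an `(l,q)`-biregular
Ramanujan bigraph. -/
theorem arrayB_ramanujan_of_ge (q l : ℕ) (hq : q.Prime) (hq2 : 2 ≤ q) (hql : q ≤ l) :
    (∀ μ : ℝ, Module.End.HasEigenvalue (Matrix.toLin' (arrayB q l * (arrayB q l)ᵀ)) μ →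
      μ ≠ (q : ℝ) * l → μ ≤ (Real.sqrt ((l : ℝ) - 1) + Real.sqrt ((q : ℝ) - 1)) ^ 2) ∧
    (∀ s : ℝ, 0 ≤ s →
      Module.End.HasEigenvalue (Matrix.toLin' (arrayB q l * (arrayB q l)ᵀ)) (s ^ 2) →
      s ≠ Real.sqrt ((q : ℝ) * l) →
      s ≤ Real.sqrt ((l : ℝ) - 1) + Real.sqrt ((q : ℝ) - 1)) := by
  haveI : NeZero q := ⟨by omega⟩
  have hl2 : 2 ≤ l := le_trans hq2 hql
  have hlr : (2:ℝ) ≤ (l:ℝ) := by exact_mod_cast hl2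
  have hqr : (2:ℝ) ≤ (q:ℝ) := by exact_mod_cast hq2
  set b : ℝ := Real.sqrt ((l : ℝ) - 1) + Real.sqrt ((q : ℝ) - 1) with hbdef
  have ha1 : (1:ℝ) ≤ Real.sqrt ((l : ℝ) - 1) := by
    have h := Real.sqrt_le_sqrt (show (1:ℝ) ≤ (l:ℝ) - 1 by linarith)
    rwa [Real.sqrt_one] at h
  have ha2 : (1:ℝ) ≤ Real.sqrt ((q : ℝ) - 1) := by
    have h := Real.sqrt_le_sqrt (show (1:ℝ) ≤ (q:ℝ) - 1 by linarith)
    rwa [Real.sqrt_one] at h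
  have hbound : (l : ℝ) + q ≤ b ^ 2 := by
    have e : b ^ 2 = Real.sqrt ((l : ℝ) - 1) ^ 2 + Real.sqrt ((q : ℝ) - 1) ^ 2
        + 2 * (Real.sqrt ((l : ℝ) - 1) * Real.sqrt ((q : ℝ) - 1)) := by
      rw [hbdef]; ring
    rw [Real.sq_sqrt (show (0:ℝ) ≤ (l:ℝ) - 1 by linarith),
        Real.sq_sqrt (show (0:ℝ) ≤ (q:ℝ) - 1 by linarith)] at e
    have hprod : (1:ℝ) ≤ Real.sqrt ((l : ℝ) - 1) * Real.sqrt ((q : ℝ) - 1) := by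
      nlinarith
    rw [e]
    linarith
  have part1 : ∀ μ : ℝ, Module.End.HasEigenvalue
      (Matrix.toLin' (arrayB q l * (arrayB q l)ᵀ)) μ →
      μ ≠ (q : ℝ) * l → μ ≤ b ^ 2 := by
    intro μ hμ hne
    obtain ⟨v, hv⟩ := hμ.exists_hasEigenvector
    have hv1 : (arrayB q l * (arrayB q l)ᵀ).mulVec v = μ • v := by
      have h := hv.apply_eq_smul
      rwa [Matrix.toLin'_apply] at h
    set B := arrayB q l with hB
    set M := arrayB q l * (arrayB q l)ᵀ with hM
    -- sum of v is zero
    have hMT : Mᵀ = M := by rw [hM, Matrix.transpose_mul, Matrix.transpose_transpose]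
    have hvecMul : v ᵥ* M = μ • v := by
      rw [← Matrix.mulVec_transpose, hMT, hv1]
    have hsum : ∑ p : Fin q × Fin q, v p = 0 := by
      have d1 : v ⬝ᵥ (M.mulVec (fun _ => (1:ℝ)))
          = ((q : ℝ) * l) * ∑ p : Fin q × Fin q, v p := by
        rw [hM, arrayB_mulVec_ones]
        simp only [dotProduct]
        rw [Finset.mul_sum]
        apply Finset.sum_congr rfl
        intro p _
        ring
      have d2 : v ⬝ᵥ (M.mulVec (fun _ => (1:ℝ))) = μ * ∑ p : Fin q × Fin q, v p := by
        rw [Matrix.dotProduct_mulVec, hvecMul]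
        simp only [dotProduct, Pi.smul_apply, smul_eq_mul]
        rw [Finset.mul_sum]
        apply Finset.sum_congr rfl
        intro p _
        ring
      have : (μ - (q : ℝ) * l) * ∑ p : Fin q × Fin q, v p = 0 := by
        rw [sub_mul, ← d1, ← d2, sub_self]
      rcases mul_eq_zero.mp this with h | h
      · exact absurd (by linarith [sub_eq_zero.mp h] : μ = (q:ℝ)*l) hne
      · exact h
    -- positivity of the norm
    set N : ℝ := ∑ p : Fin q × Fin q, (v p) ^ 2 with hN
    have hNpos : 0 < N := by
      obtain ⟨p, hp⟩ := Function.ne_iff.mp hv.2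
      apply Finset.sum_pos' (fun _ _ => sq_nonneg _)
      exact ⟨p, Finset.mem_univ _,
        lt_of_le_of_ne (sq_nonneg _) (Ne.symm (pow_ne_zero 2 hp))⟩
    -- quadratic form
    set u : Fin l × Fin q → ℝ := Bᵀ.mulVec v with hu
    have hQF : μ * N = ∑ jc : Fin l × Fin q, (u jc) ^ 2 := by
      have e1 : v ⬝ᵥ (M.mulVec v) = μ * N := by
        rw [hv1]
        simp only [dotProduct, Pi.smul_apply, smul_eq_mul, hN]
        rw [Finset.mul_sum]
        apply Finset.sum_congr rfl
        intro p _
        ring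
      have e2 : v ⬝ᵥ (M.mulVec v) = ∑ jc : Fin l × Fin q, (u jc) ^ 2 := by
        rw [hM, ← Matrix.mulVec_mulVec, Matrix.dotProduct_mulVec,
          ← Matrix.mulVec_transpose]
        simp only [dotProduct, hu]
        apply Finset.sum_congr rfl
        intro jc _
        ring
      rw [← e1, e2]
    -- translate to ZMod picture
    set w : ZMod q → ZMod q → ℝ :=
      fun x y => v ((zEquiv q).symm x, (zEquiv q).symm y) with hw
    have hvw : ∀ i s : Fin q, v (i, s) = w (i : ZMod q) (s : ZMod q) := by
      intro i s
      rw [hw]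
      simp only [← zEquiv_apply, Equiv.symm_apply_apply]
    have husum : ∀ (j : Fin l) (c : Fin q),
        u (j, c) = ∑ x : ZMod q, w x ((c : ZMod q) + x * (j : ZMod q)) := by
      intro j c
      have step1 : u (j, c) = ∑ i : Fin q, ∑ s : Fin q, B (i, s) (j, c) * v (i, s) := by
        rw [hu]
        simp only [Matrix.mulVec, dotProduct, Matrix.transpose_apply]
        rw [Fintype.sum_prod_type]
      rw [step1]
      have step2 : ∀ i : Fin q, ∑ s : Fin q, B (i, s) (j, c) * v (i, s)
          = w (i : ZMod q) ((c : ZMod q) + (i : ZMod q) * (j : ZMod q)) := by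
        intro i
        have : ∀ s : Fin q, B (i, s) (j, c) * v (i, s)
            = if ((c : ZMod q) + (i : ZMod q) * (j : ZMod q)) = (s : ZMod q)
              then v (i, s) else 0 := by
          intro s
          rw [hB, arrayB_apply]
          by_cases h : (c : ZMod q) + (i : ZMod q) * (j : ZMod q) = (s : ZMod q)
          · rw [if_pos h, if_pos (by rw [← h]; ring), one_mul]
          · rw [if_neg h, if_neg (fun h' => h (by rw [h']; ring)), zero_mul]
        simp_rw [this]
        rw [sum_ite_fin q _ (fun s => v (i, s)), hw]
        simp only [← zEquiv_apply, Equiv.symm_apply_apply]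
      simp_rw [step2]
      exact Equiv.sum_comp (zEquiv q)
        (fun x => w x ((c : ZMod q) + x * (j : ZMod q)))
    -- sums of w
    have hwS : ∑ x : ZMod q, ∑ y : ZMod q, w x y = 0 := by
      rw [← Equiv.sum_comp (zEquiv q) (fun x => ∑ y : ZMod q, w x y)]
      have : ∀ i : Fin q, ∑ y : ZMod q, w (zEquiv q i) y = ∑ s : Fin q, v (i, s) := by
        intro i
        rw [← Equiv.sum_comp (zEquiv q) (fun y => w (zEquiv q i) y)]
        apply Finset.sum_congr rfl
        intro s _
        rw [zEquiv_apply, zEquiv_apply, ← hvw]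
      simp_rw [this]
      rw [← Fintype.sum_prod_type]
      exact hsum
    have hwN : ∑ x : ZMod q, ∑ y : ZMod q, (w x y) ^ 2 = N := by
      rw [← Equiv.sum_comp (zEquiv q) (fun x => ∑ y : ZMod q, (w x y) ^ 2)]
      have : ∀ i : Fin q, ∑ y : ZMod q, (w (zEquiv q i) y) ^ 2
          = ∑ s : Fin q, (v (i, s)) ^ 2 := by
        intro i
        rw [← Equiv.sum_comp (zEquiv q) (fun y => (w (zEquiv q i) y) ^ 2)]
        apply Finset.sum_congr rfl
        intro s _
        rw [zEquiv_apply, zEquiv_apply, ← hvw]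
      simp_rw [this]
      rw [hN]
      exact (Fintype.sum_prod_type (f := fun p : Fin q × Fin q => v p ^ 2)).symm
    -- the Q function
    set Q : ZMod q → ℝ :=
      fun t => ∑ c : ZMod q, (∑ x : ZMod q, w x (c + x * t)) ^ 2 with hQ
    have hQnonneg : ∀ t, 0 ≤ Q t := fun t => Finset.sum_nonneg fun _ _ => sq_nonneg _
    have hform : μ * N = ∑ j : Fin l, Q (j : ZMod q) := by
      rw [hQF, Fintype.sum_prod_type]
      apply Finset.sum_congr rfl
      intro j _
      show ∑ c : Fin q, u (j, c) ^ 2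
          = ∑ c : ZMod q, (∑ x : ZMod q, w x (c + x * (j : ZMod q))) ^ 2
      rw [← Equiv.sum_comp (zEquiv q)
        (fun c => (∑ x : ZMod q, w x (c + x * (j : ZMod q))) ^ 2)]
      apply Finset.sum_congr rfl
      intro c _
      rw [husum, zEquiv_apply]
    have hQsum : ∑ t : ZMod q, Q t ≤ q * N := by
      rw [← hwN]
      exact key_ineq q hq w hwS
    have hfinal : μ * N ≤ ((l / q + 1 : ℕ) : ℝ) * (q * N) := by
      rw [hform]
      calc ∑ j : Fin l, Q (j : ZMod q)
          ≤ ((l / q + 1 : ℕ) : ℝ) * ∑ t : ZMod q, Q t := sum_fin_le q l Q hQnonneg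
        _ ≤ ((l / q + 1 : ℕ) : ℝ) * (q * N) := by
            apply mul_le_mul_of_nonneg_left hQsum (by positivity)
    have hmu : μ ≤ ((l / q + 1 : ℕ) : ℝ) * q := by
      have h := hfinal
      rw [show ((l / q + 1 : ℕ) : ℝ) * (q * N) = (((l / q + 1 : ℕ) : ℝ) * q) * N by ring] at h
      exact le_of_mul_le_mul_right (by linarith) hNpos
    have hnat : (l / q + 1) * q ≤ l + q := by
      rw [add_mul, one_mul]
      exact Nat.add_le_add_right (Nat.div_mul_le_self l q) q
    have hcast : ((l / q + 1 : ℕ) : ℝ) * q ≤ (l : ℝ) + q := by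
      exact_mod_cast hnat
    linarith
  refine ⟨part1, ?_⟩
  intro s hs hsev hneq
  have hs2 : s ^ 2 ≠ (q : ℝ) * l := by
    intro h
    exact hneq (by rw [← h, Real.sqrt_sq hs])
  have h := part1 (s ^ 2) hsev hs2
  have hbpos : 0 ≤ b := le_trans zero_le_one (le_trans ha1 (by linarith))
  calc s = Real.sqrt (s ^ 2) := (Real.sqrt_sq hs).symm
    _ ≤ Real.sqrt (b ^ 2) := Real.sqrt_le_sqrt h
    _ = b := Real.sqrt_sq hbpos
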